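/- arXiv:2207.00079 — 2 statements merged into one kernel-verified Lean document; each statement's English description precedes it below -/
import Mathlib

section
/- Let W : GL⁺(3,ℝ) → [0,∞) be a C¹ strain energy function that is objective and isotropic, with Piola–Kirchhoff stress S, and let L(λ) = W(F(λ,ω)) (which is independent of ω). Then for all λ ∈ ℝ₊² and ω ∈ S²: S(F(λ,ω)) = L,₁(λ) P₁(ω) + (1/2) L,₂(λ) P₂(ω), and the Cauchy stress T(F) = (det F)^{−1} S(F) Fᵀ satisfies T(F(λ,ω)) = (λ₁λ₂²)^{−1} [ λ₁ L,₁(λ) P₁(ω) + (1/2) λ₂ L,₂(λ) P₂(ω) ]. -/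
open Matrix Set MeasureTheory

noncomputable section

attribute [local instance] Matrix.normedAddCommGroup Matrix.normedSpace

abbrev Mat3 := Matrix (Fin 3) (Fin 3) ℝ
abbrev V3 := EuclideanSpace ℝ (Fin 3)

def GLpos (F : Mat3) : Prop := 0 < F.det

def Objective (W : Mat3 → ℝ) : Prop :=
  ∀ F : Mat3, GLpos F → ∀ U : Mat3, U * Uᵀ = 1 → U.det = 1 → W (U * F) = W F

def Isotropic (W : Mat3 → ℝ) : Prop :=
  ∀ F : Mat3, GLpos F → ∀ U : Mat3, U * Uᵀ = 1 → U.det = 1 → W (F * U) = W F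

def HomDeg (W : Mat3 → ℝ) (h : ℝ) : Prop :=
  ∀ F : Mat3, GLpos F → ∀ σ : ℝ, 0 < σ → W (σ • F) = σ ^ h * W F

noncomputable def PK (W : Mat3 → ℝ) (F : Mat3) : Mat3 :=
  Matrix.of fun i j => fderiv ℝ W F (Matrix.single i j 1)

noncomputable def jac (φ : V3 → V3) (y : V3) : Mat3 :=
  Matrix.of fun i j => fderiv ℝ (fun z => φ z i) y (EuclideanSpace.single j 1)

noncomputable def jacIn (φ : V3 → V3) (s : Set V3) (y : V3) : Mat3 :=
  Matrix.of fun i j => fderivWithin ℝ (fun z => φ z i) s y (EuclideanSpace.single j 1)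

noncomputable def divMat (S : V3 → Mat3) (y : V3) : V3 :=
  WithLp.toLp 2 fun i => ∑ j : Fin 3, fderiv ℝ (fun z => S z i j) y (EuclideanSpace.single j 1)

noncomputable def P1 (ω : V3) : Mat3 := Matrix.vecMulVec (fun i => ω i) (fun i => ω i)

noncomputable def P2 (ω : V3) : Mat3 := 1 - P1 ω

noncomputable def Fmat (l1 l2 : ℝ) (ω : V3) : Mat3 := l1 • P1 ω + l2 • P2 ω

open scoped Classical in
/-- The spherically symmetric map `y ↦ φ(|y|) y/|y|` (with value `0` at `y = 0`). -/
noncomputable def sphMap (φ : ℝ → ℝ) (y : V3) : V3 :=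
  if y = 0 then 0 else (φ ‖y‖ / ‖y‖) • y

/-- The restriction `L(λ₁,λ₂) = W(F(λ,ω))` of `W` to spherically symmetric deformation
gradients (computed with the fixed direction `ω₀ = e₁`, on which it does not depend). -/
noncomputable def Lfun (W : Mat3 → ℝ) (l1 l2 : ℝ) : ℝ :=
  W (Fmat l1 l2 (EuclideanSpace.single 0 1))


variable {W : Mat3 → ℝ}

lemma isOpen_GLpos : IsOpen {F : Mat3 | GLpos F} :=
  isOpen_lt continuous_const (continuous_id.matrix_det)

/-- conjugation as a continuous linear map -/
def conjCLM (Q : Mat3) : Mat3 →L[ℝ] Mat3 :=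
  LinearMap.toContinuousLinearMap
    ((LinearMap.mulRight ℝ Qᵀ).comp (LinearMap.mulLeft ℝ Q))

@[simp] lemma conjCLM_apply (Q H : Mat3) : conjCLM Q H = Q * H * Qᵀ := rfl

variable {W : Mat3 → ℝ}

lemma W_diffAt (hWC1 : ContDiffOn ℝ 1 W {F : Mat3 | GLpos F}) {F : Mat3} (hF : GLpos F) :
    DifferentiableAt ℝ W F :=
  ((hWC1.differentiableOn one_ne_zero).differentiableAt (isOpen_GLpos.mem_nhds hF))

lemma W_conj_inv (hobj : Objective W) (hiso : Isotropic W) {Q : Mat3}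
    (hQ : Q * Qᵀ = 1) (hdQ : Q.det = 1) {X : Mat3} (hX : GLpos X) :
    W (Q * X * Qᵀ) = W X := by
  have hQ' : Qᵀ * Q = 1 := mul_eq_one_comm.mp hQ
  have hdQt : Qᵀ.det = 1 := by rw [Matrix.det_transpose]; exact hdQ
  have hXQ : GLpos (X * Qᵀ) := by
    unfold GLpos at *
    rw [Matrix.det_mul, hdQt, mul_one]; exact hX
  have h1 : W (Q * (X * Qᵀ)) = W (X * Qᵀ) := hobj _ hXQ Q hQ hdQ
  have h2 : W (X * Qᵀ) = W X := hiso X hX Qᵀ (by rw [Matrix.transpose_transpose]; exact hQ') hdQt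
  rw [mul_assoc]; rw [h1, h2]

lemma GLpos_conj {Q : Mat3} (hdQ : Q.det = 1) {X : Mat3} (hX : GLpos X) :
    GLpos (Q * X * Qᵀ) := by
  unfold GLpos at *
  rw [Matrix.det_mul, Matrix.det_mul, Matrix.det_transpose, hdQ]
  simpa using hX

/-- Key chain-rule lemma: invariance of the derivative under conjugation. -/
lemma fderiv_conj (hWC1 : ContDiffOn ℝ 1 W {F : Mat3 | GLpos F})
    (hobj : Objective W) (hiso : Isotropic W) {G : Mat3} (hG : GLpos G) {Q : Mat3}
    (hQ : Q * Qᵀ = 1) (hdQ : Q.det = 1) (H : Mat3) :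
    fderiv ℝ W (Q * G * Qᵀ) (Q * H * Qᵀ) = fderiv ℝ W G H := by
  have hGQ : GLpos (Q * G * Qᵀ) := GLpos_conj hdQ hG
  have hφ : HasFDerivAt (fun X => W (conjCLM Q X))
      ((fderiv ℝ W (Q * G * Qᵀ)).comp (conjCLM Q)) G := by
    have h1 : HasFDerivAt W (fderiv ℝ W (Q * G * Qᵀ)) (conjCLM Q G) := by
      simpa using (W_diffAt hWC1 hGQ).hasFDerivAt
    exact h1.comp G (conjCLM Q).hasFDerivAt
  have heq : (fun X => W (conjCLM Q X)) =ᶠ[nhds G] W := by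
    filter_upwards [isOpen_GLpos.mem_nhds hG] with X hX
    simpa using W_conj_inv hobj hiso hQ hdQ hX
  have hW : HasFDerivAt W ((fderiv ℝ W (Q * G * Qᵀ)).comp (conjCLM Q)) G :=
    hφ.congr_of_eventuallyEq heq.symm
  have := hW.unique (W_diffAt hWC1 hG).hasFDerivAt
  calc fderiv ℝ W (Q * G * Qᵀ) (Q * H * Qᵀ)
      = ((fderiv ℝ W (Q * G * Qᵀ)).comp (conjCLM Q)) H := by simp
    _ = fderiv ℝ W G H := by rw [hW.unique (W_diffAt hWC1 hG).hasFDerivAt]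


lemma conj_std (Q : Mat3) (i j a b : Fin 3) :
    (Qᵀ * Matrix.single i j (1:ℝ) * Q : Mat3) a b = Q i a * Q j b := by
  simp [Matrix.mul_apply, Matrix.single, Matrix.transpose_apply, Finset.sum_ite_eq,
    ite_and, Finset.mul_sum, Finset.sum_mul]

lemma PK_conj (hWC1 : ContDiffOn ℝ 1 W {F : Mat3 | GLpos F})
    (hobj : Objective W) (hiso : Isotropic W) {G : Mat3} (hG : GLpos G) {Q : Mat3}
    (hQ : Q * Qᵀ = 1) (hdQ : Q.det = 1) :
    PK W (Q * G * Qᵀ) = Q * PK W G * Qᵀ := by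
  ext i j
  have hE : Q * (Qᵀ * Matrix.single i j (1:ℝ) * Q) * Qᵀ = Matrix.single i j 1 := by
    have h : Q * (Qᵀ * Matrix.single i j (1:ℝ) * Q) * Qᵀ
        = (Q * Qᵀ) * Matrix.single i j 1 * (Q * Qᵀ) := by noncomm_ring
    rw [h, hQ, one_mul, mul_one]
  have h1 : PK W (Q*G*Qᵀ) i j = fderiv ℝ W G (Qᵀ * Matrix.single i j 1 * Q) := by
    show fderiv ℝ W (Q*G*Qᵀ) (Matrix.single i j 1) = _
    conv_lhs => rw [← hE]
    exact fderiv_conj hWC1 hobj hiso hG hQ hdQ _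
  have hexp : (Qᵀ * Matrix.single i j (1:ℝ) * Q : Mat3)
      = ∑ a : Fin 3, ∑ b : Fin 3, (Q i a * Q j b) • Matrix.single a b (1:ℝ) := by
    nth_rewrite 1 [Matrix.matrix_eq_sum_single (Qᵀ * Matrix.single i j (1:ℝ) * Q)]
    refine Finset.sum_congr rfl fun a _ => Finset.sum_congr rfl fun b _ => ?_
    rw [Matrix.smul_single, smul_eq_mul, mul_one, conj_std]
  rw [h1, hexp, map_sum]
  show _ = (Q * PK W G * Qᵀ) i j
  simp only [map_sum, Matrix.mul_apply, Matrix.transpose_apply, Finset.sum_mul, Finset.mul_sum]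
  rw [Finset.sum_comm]
  refine Finset.sum_congr rfl fun a _ => Finset.sum_congr rfl fun b _ => ?_
  rw [_root_.map_smul, smul_eq_mul]
  simp only [PK, Matrix.of_apply]
  ring


abbrev e1 : V3 := EuclideanSpace.single 0 1

lemma P1_e1 : P1 e1 = Matrix.single 0 0 (1:ℝ) := by
  ext i j
  fin_cases i <;> fin_cases j <;>
    simp [P1, Matrix.vecMulVec_apply, EuclideanSpace.single_apply, Matrix.single]

lemma Fmat_e1 (l1 l2 : ℝ) : Fmat l1 l2 e1 = !![l1,0,0;0,l2,0;0,0,l2] := by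
  ext i j
  fin_cases i <;> fin_cases j <;>
    simp [Fmat, P1, P2, Matrix.vecMulVec_apply, EuclideanSpace.single_apply, Matrix.one_apply,
      Matrix.smul_apply, Matrix.sub_apply, Matrix.add_apply, Matrix.vecHead, Matrix.vecTail]

lemma GLpos_D {l1 l2 : ℝ} (hl1 : 0 < l1) (hl2 : 0 < l2) : GLpos (Fmat l1 l2 e1) := by
  rw [GLpos, Fmat_e1, Matrix.det_fin_three]
  norm_num
  simp [Matrix.cons_val_two, Matrix.vecHead, Matrix.vecTail]
  positivity

lemma hasDeriv_L1 (hWC1 : ContDiffOn ℝ 1 W {F : Mat3 | GLpos F}) {l1 l2 : ℝ}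
    (hl1 : 0 < l1) (hl2 : 0 < l2) :
    HasDerivAt (fun s => Lfun W s l2) (fderiv ℝ W (Fmat l1 l2 e1) (P1 e1)) l1 := by
  have hD : GLpos (Fmat l1 l2 e1) := GLpos_D hl1 hl2
  have hg : ∀ s : ℝ, Fmat s l2 e1 = Fmat l1 l2 e1 + (s - l1) • P1 e1 := by
    intro s; simp only [Fmat]; module
  have haff : HasDerivAt (fun s : ℝ => Fmat l1 l2 e1 + (s - l1) • P1 e1) (P1 e1) l1 := by
    have h1 : HasDerivAt (fun s : ℝ => s - l1) 1 l1 := (hasDerivAt_id l1).sub_const l1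
    have h2 := (h1.smul_const (P1 e1)).const_add (Fmat l1 l2 e1)
    rw [one_smul] at h2; exact h2
  have hW' : HasFDerivAt W (fderiv ℝ W (Fmat l1 l2 e1))
      ((fun s : ℝ => Fmat l1 l2 e1 + (s - l1) • P1 e1) l1) := by
    simpa using (W_diffAt hWC1 hD).hasFDerivAt
  have hcomp := hW'.comp_hasDerivAt l1 haff
  have : (fun s => Lfun W s l2) = W ∘ (fun s : ℝ => Fmat l1 l2 e1 + (s - l1) • P1 e1) :=
    funext fun s => by simp only [Lfun, Function.comp]; rw [← hg]
  rw [this]; exact hcomp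

lemma hasDeriv_L2 (hWC1 : ContDiffOn ℝ 1 W {F : Mat3 | GLpos F}) {l1 l2 : ℝ}
    (hl1 : 0 < l1) (hl2 : 0 < l2) :
    HasDerivAt (fun s => Lfun W l1 s) (fderiv ℝ W (Fmat l1 l2 e1) (P2 e1)) l2 := by
  have hD : GLpos (Fmat l1 l2 e1) := GLpos_D hl1 hl2
  have hg : ∀ s : ℝ, Fmat l1 s e1 = Fmat l1 l2 e1 + (s - l2) • P2 e1 := by
    intro s; simp only [Fmat]; module
  have haff : HasDerivAt (fun s : ℝ => Fmat l1 l2 e1 + (s - l2) • P2 e1) (P2 e1) l2 := by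
    have h1 : HasDerivAt (fun s : ℝ => s - l2) 1 l2 := (hasDerivAt_id l2).sub_const l2
    have h2 := (h1.smul_const (P2 e1)).const_add (Fmat l1 l2 e1)
    rw [one_smul] at h2; exact h2
  have hW' : HasFDerivAt W (fderiv ℝ W (Fmat l1 l2 e1))
      ((fun s : ℝ => Fmat l1 l2 e1 + (s - l2) • P2 e1) l2) := by
    simpa using (W_diffAt hWC1 hD).hasFDerivAt
  have hcomp := hW'.comp_hasDerivAt l2 haff
  have : (fun s => Lfun W l1 s) = W ∘ (fun s : ℝ => Fmat l1 l2 e1 + (s - l2) • P2 e1) :=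
    funext fun s => by simp only [Lfun, Function.comp]; rw [← hg]
  rw [this]; exact hcomp

lemma stdlit00 : Matrix.single (0:Fin 3) (0:Fin 3) (1:ℝ) = !![1,0,0;0,0,0;0,0,0] := by
  ext a b; fin_cases a <;> fin_cases b <;> rfl
lemma stdlit01 : Matrix.single (0:Fin 3) (1:Fin 3) (1:ℝ) = !![0,1,0;0,0,0;0,0,0] := by
  ext a b; fin_cases a <;> fin_cases b <;> rfl
lemma stdlit02 : Matrix.single (0:Fin 3) (2:Fin 3) (1:ℝ) = !![0,0,1;0,0,0;0,0,0] := by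
  ext a b; fin_cases a <;> fin_cases b <;> rfl
lemma stdlit10 : Matrix.single (1:Fin 3) (0:Fin 3) (1:ℝ) = !![0,0,0;1,0,0;0,0,0] := by
  ext a b; fin_cases a <;> fin_cases b <;> rfl
lemma stdlit11 : Matrix.single (1:Fin 3) (1:Fin 3) (1:ℝ) = !![0,0,0;0,1,0;0,0,0] := by
  ext a b; fin_cases a <;> fin_cases b <;> rfl
lemma stdlit12 : Matrix.single (1:Fin 3) (2:Fin 3) (1:ℝ) = !![0,0,0;0,0,1;0,0,0] := by
  ext a b; fin_cases a <;> fin_cases b <;> rfl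
lemma stdlit20 : Matrix.single (2:Fin 3) (0:Fin 3) (1:ℝ) = !![0,0,0;0,0,0;1,0,0] := by
  ext a b; fin_cases a <;> fin_cases b <;> rfl
lemma stdlit21 : Matrix.single (2:Fin 3) (1:Fin 3) (1:ℝ) = !![0,0,0;0,0,0;0,1,0] := by
  ext a b; fin_cases a <;> fin_cases b <;> rfl
lemma stdlit22 : Matrix.single (2:Fin 3) (2:Fin 3) (1:ℝ) = !![0,0,0;0,0,0;0,0,1] := by
  ext a b; fin_cases a <;> fin_cases b <;> rfl

lemma P2_e1 : P2 e1 = Matrix.single 1 1 (1:ℝ) + Matrix.single 2 2 (1:ℝ) := by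
  ext i j
  fin_cases i <;> fin_cases j <;>
    simp [P2, P1, Matrix.vecMulVec_apply, EuclideanSpace.single_apply, Matrix.one_apply,
      Matrix.sub_apply, Matrix.add_apply, Matrix.single, Matrix.of_apply]

lemma neg_dir (hWC1 : ContDiffOn ℝ 1 W {F : Mat3 | GLpos F})
    (hobj : Objective W) (hiso : Isotropic W) {F0 Q : Mat3} (hF0 : GLpos F0)
    (hQ : Q * Qᵀ = 1) (hd : Q.det = 1) (hQF : Q * F0 * Qᵀ = F0) {H : Mat3}
    (hH : Q * H * Qᵀ = -H) : fderiv ℝ W F0 H = 0 := by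
  have h := fderiv_conj hWC1 hobj hiso hF0 hQ hd H
  rw [hQF, hH, map_neg] at h
  linarith

set_option maxHeartbeats 2000000 in
lemma PK_e1 (hWC1 : ContDiffOn ℝ 1 W {F : Mat3 | GLpos F})
    (hobj : Objective W) (hiso : Isotropic W) {l1 l2 : ℝ} (hl1 : 0 < l1) (hl2 : 0 < l2) :
    PK W (Fmat l1 l2 e1)
      = (deriv (fun s => Lfun W s l2) l1) • P1 e1
        + ((1/2) * deriv (fun s => Lfun W l1 s) l2) • P2 e1 := by
  have hF0 : GLpos (Fmat l1 l2 e1) := GLpos_D hl1 hl2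
  set Q1 : Mat3 := !![1,0,0;0,0,-1;0,1,0] with hQ1def
  set Q2 : Mat3 := !![1,0,0;0,-1,0;0,0,-1] with hQ2def
  set Q3 : Mat3 := !![-1,0,0;0,1,0;0,0,-1] with hQ3def
  have hT1 : Q1ᵀ = !![1,0,0;0,0,1;0,-1,0] := by
    rw [hQ1def]; ext i j; fin_cases i <;> fin_cases j <;> rfl
  have hT2 : Q2ᵀ = Q2 := by
    rw [hQ2def]; ext i j; fin_cases i <;> fin_cases j <;> rfl
  have hT3 : Q3ᵀ = Q3 := by
    rw [hQ3def]; ext i j; fin_cases i <;> fin_cases j <;> rfl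
  have hQ1 : Q1 * Q1ᵀ = 1 := by
    rw [hT1, hQ1def, Matrix.mul_fin_three, Matrix.one_fin_three]; norm_num
  have hQ2 : Q2 * Q2ᵀ = 1 := by
    rw [hT2, hQ2def, Matrix.mul_fin_three, Matrix.one_fin_three]; norm_num
  have hQ3 : Q3 * Q3ᵀ = 1 := by
    rw [hT3, hQ3def, Matrix.mul_fin_three, Matrix.one_fin_three]; norm_num
  have hd1 : Q1.det = 1 := by rw [hQ1def, Matrix.det_fin_three]; norm_num; simp [Matrix.cons_val_two, Matrix.vecHead, Matrix.vecTail]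
  have hd2 : Q2.det = 1 := by rw [hQ2def, Matrix.det_fin_three]; norm_num; simp [Matrix.cons_val_two, Matrix.vecHead, Matrix.vecTail]
  have hd3 : Q3.det = 1 := by rw [hQ3def, Matrix.det_fin_three]; norm_num; simp [Matrix.cons_val_two, Matrix.vecHead, Matrix.vecTail]
  have hQF1 : Q1 * Fmat l1 l2 e1 * Q1ᵀ = Fmat l1 l2 e1 := by
    rw [Fmat_e1, hT1, hQ1def, Matrix.mul_fin_three, Matrix.mul_fin_three]; norm_num
  have hQF2 : Q2 * Fmat l1 l2 e1 * Q2ᵀ = Fmat l1 l2 e1 := by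
    rw [Fmat_e1, hT2, hQ2def, Matrix.mul_fin_three, Matrix.mul_fin_three]; norm_num
  have hQF3 : Q3 * Fmat l1 l2 e1 * Q3ᵀ = Fmat l1 l2 e1 := by
    rw [Fmat_e1, hT3, hQ3def, Matrix.mul_fin_three, Matrix.mul_fin_three]; norm_num
  have h00 : fderiv ℝ W (Fmat l1 l2 e1) (Matrix.single 0 0 1)
      = deriv (fun s => Lfun W s l2) l1 := by
    rw [(hasDeriv_L1 hWC1 hl1 hl2).deriv, P1_e1]
  have hsum : fderiv ℝ W (Fmat l1 l2 e1) (Matrix.single 1 1 1)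
      + fderiv ℝ W (Fmat l1 l2 e1) (Matrix.single 2 2 1)
      = deriv (fun s => Lfun W l1 s) l2 := by
    rw [(hasDeriv_L2 hWC1 hl1 hl2).deriv, P2_e1, map_add]
  have h1122 : fderiv ℝ W (Fmat l1 l2 e1) (Matrix.single 1 1 1)
      = fderiv ℝ W (Fmat l1 l2 e1) (Matrix.single 2 2 1) := by
    have h := fderiv_conj hWC1 hobj hiso hF0 hQ1 hd1 (Matrix.single 1 1 1)
    rw [hQF1] at h
    have hE : Q1 * Matrix.single 1 1 (1:ℝ) * Q1ᵀ = Matrix.single 2 2 1 := by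
      rw [hT1, hQ1def, stdlit11, stdlit22, Matrix.mul_fin_three, Matrix.mul_fin_three]; norm_num
    rw [hE] at h
    exact h.symm
  have h11 : fderiv ℝ W (Fmat l1 l2 e1) (Matrix.single 1 1 1)
      = (1/2) * deriv (fun s => Lfun W l1 s) l2 := by
    rw [h1122] at hsum ⊢
    linarith
  have h22 : fderiv ℝ W (Fmat l1 l2 e1) (Matrix.single 2 2 1)
      = (1/2) * deriv (fun s => Lfun W l1 s) l2 := by rw [← h1122]; exact h11
  have hoff01 : fderiv ℝ W (Fmat l1 l2 e1) (Matrix.single 0 1 1) = 0 := by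
    refine neg_dir hWC1 hobj hiso hF0 hQ2 hd2 hQF2 ?_
    rw [hT2, hQ2def, stdlit01, Matrix.mul_fin_three, Matrix.mul_fin_three]
    norm_num
  have hoff10 : fderiv ℝ W (Fmat l1 l2 e1) (Matrix.single 1 0 1) = 0 := by
    refine neg_dir hWC1 hobj hiso hF0 hQ2 hd2 hQF2 ?_
    rw [hT2, hQ2def, stdlit10, Matrix.mul_fin_three, Matrix.mul_fin_three]
    norm_num
  have hoff02 : fderiv ℝ W (Fmat l1 l2 e1) (Matrix.single 0 2 1) = 0 := by
    refine neg_dir hWC1 hobj hiso hF0 hQ2 hd2 hQF2 ?_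
    rw [hT2, hQ2def, stdlit02, Matrix.mul_fin_three, Matrix.mul_fin_three]
    norm_num
  have hoff20 : fderiv ℝ W (Fmat l1 l2 e1) (Matrix.single 2 0 1) = 0 := by
    refine neg_dir hWC1 hobj hiso hF0 hQ2 hd2 hQF2 ?_
    rw [hT2, hQ2def, stdlit20, Matrix.mul_fin_three, Matrix.mul_fin_three]
    norm_num
  have hoff12 : fderiv ℝ W (Fmat l1 l2 e1) (Matrix.single 1 2 1) = 0 := by
    refine neg_dir hWC1 hobj hiso hF0 hQ3 hd3 hQF3 ?_
    rw [hT3, hQ3def, stdlit12, Matrix.mul_fin_three, Matrix.mul_fin_three]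
    norm_num
  have hoff21 : fderiv ℝ W (Fmat l1 l2 e1) (Matrix.single 2 1 1) = 0 := by
    refine neg_dir hWC1 hobj hiso hF0 hQ3 hd3 hQF3 ?_
    rw [hT3, hQ3def, stdlit21, Matrix.mul_fin_three, Matrix.mul_fin_three]
    norm_num
  have hP1lit : P1 e1 = !![1,0,0;0,0,0;0,0,0] := by rw [P1_e1, stdlit00]
  have hP2lit : P2 e1 = !![0,0,0;0,1,0;0,0,1] := by
    rw [P2_e1, stdlit11, stdlit22]; norm_num
  ext i j
  fin_cases i <;> fin_cases j
  · show fderiv ℝ W (Fmat l1 l2 e1) (Matrix.single 0 0 1) = _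
    rw [h00, hP1lit, hP2lit]
    norm_num
  · show fderiv ℝ W (Fmat l1 l2 e1) (Matrix.single 0 1 1) = _
    rw [hoff01, hP1lit, hP2lit]
    norm_num
  · show fderiv ℝ W (Fmat l1 l2 e1) (Matrix.single 0 2 1) = _
    rw [hoff02, hP1lit, hP2lit]
    norm_num
  · show fderiv ℝ W (Fmat l1 l2 e1) (Matrix.single 1 0 1) = _
    rw [hoff10, hP1lit, hP2lit]
    norm_num
  · show fderiv ℝ W (Fmat l1 l2 e1) (Matrix.single 1 1 1) = _
    rw [h11, hP1lit, hP2lit]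
    norm_num
  · show fderiv ℝ W (Fmat l1 l2 e1) (Matrix.single 1 2 1) = _
    rw [hoff12, hP1lit, hP2lit]
    norm_num
  · show fderiv ℝ W (Fmat l1 l2 e1) (Matrix.single 2 0 1) = _
    rw [hoff20, hP1lit, hP2lit]
    norm_num
  · show fderiv ℝ W (Fmat l1 l2 e1) (Matrix.single 2 1 1) = _
    rw [hoff21, hP1lit, hP2lit]
    norm_num
  · show fderiv ℝ W (Fmat l1 l2 e1) (Matrix.single 2 2 1) = _
    rw [h22, hP1lit, hP2lit]
    norm_num

lemma exists_rotation (ω : V3) (hω : ‖ω‖ = 1) :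
    ∃ R : Mat3, R * Rᵀ = 1 ∧ R.det = 1 ∧ (∀ i, R i 0 = ω i) := by
  have h1 : Orthonormal ℝ (({0} : Set (Fin 3)).restrict fun _ : Fin 3 => ω) := by
    constructor
    · intro i; exact hω
    · intro i j hij
      exact absurd (Subtype.ext ((i.2 : (i : Fin 3) ∈ ({0} : Set (Fin 3))).trans
        (j.2 : (j : Fin 3) ∈ ({0} : Set (Fin 3))).symm)) hij
  obtain ⟨b, hb⟩ := Orthonormal.exists_orthonormalBasis_extension_of_card_eq
    (𝕜 := ℝ) (E := V3) (by simp) h1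
  have hb0 : b 0 = ω := hb 0 rfl
  set R0 : Mat3 := Matrix.of fun i j => b j i with hR0
  have hR0o : R0ᵀ * R0 = 1 := by
    ext j k
    have h := orthonormal_iff_ite.mp b.orthonormal j k
    simp only [PiLp.inner_apply, RCLike.inner_apply, conj_trivial] at h
    rw [Matrix.mul_apply]
    simp only [hR0, Matrix.transpose_apply, Matrix.of_apply, Matrix.one_apply]
    rw [← h]; exact Finset.sum_congr rfl fun _ _ => mul_comm _ _
  have hdet2 : R0.det * R0.det = 1 := by
    have h := congrArg Matrix.det hR0o
    rwa [Matrix.det_mul, Matrix.det_transpose, Matrix.det_one] at h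
  set c : Fin 3 → ℝ := fun j => if j = 2 then R0.det else 1 with hc
  have hcsq : ∀ j, c j * c j = 1 := by
    intro j; by_cases h : j = 2 <;> simp [hc, h, hdet2]
  set R : Mat3 := R0 * Matrix.diagonal c with hR
  have hRo' : Rᵀ * R = 1 := by
    rw [hR, Matrix.transpose_mul, Matrix.diagonal_transpose, mul_assoc, ← mul_assoc R0ᵀ,
      hR0o, one_mul, Matrix.diagonal_mul_diagonal]
    ext i j
    by_cases h : i = j <;> simp [Matrix.diagonal_apply, Matrix.one_apply, h, hcsq]
  refine ⟨R, mul_eq_one_comm.mp hRo', ?_, ?_⟩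
  · rw [hR, Matrix.det_mul, Matrix.det_diagonal]
    rw [Fin.prod_univ_three]
    simp [hc, hdet2]
  · intro i
    rw [hR, Matrix.mul_diagonal]
    simp [hc, hR0, hb0]

lemma P1_conj {R : Mat3} (hRR : R * Rᵀ = 1) {ω : V3} (hcol : ∀ i, R i 0 = ω i) :
    R * P1 e1 * Rᵀ = P1 ω := by
  rw [P1_e1]
  ext i j
  rw [Matrix.mul_apply]
  simp [Matrix.mul_apply, Matrix.single, Matrix.of_apply, Matrix.transpose_apply,
    P1, Matrix.vecMulVec_apply, Fin.sum_univ_three]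
  rw [← hcol i, ← hcol j]

lemma Fmat_split (l1 l2 : ℝ) (v : V3) : Fmat l1 l2 v = l2 • (1 : Mat3) + (l1 - l2) • P1 v := by
  simp only [Fmat, P2]; module

lemma Fmat_conj {R : Mat3} (hRR : R * Rᵀ = 1) {ω : V3} (hcol : ∀ i, R i 0 = ω i)
    (l1 l2 : ℝ) : R * Fmat l1 l2 e1 * Rᵀ = Fmat l1 l2 ω := by
  rw [Fmat_split l1 l2 e1, Fmat_split l1 l2 ω]
  rw [Matrix.mul_add, Matrix.add_mul, Matrix.mul_smul, Matrix.mul_smul, Matrix.smul_mul,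
    Matrix.smul_mul, Matrix.mul_one, hRR, P1_conj hRR hcol]

lemma P2_conj {R : Mat3} (hRR : R * Rᵀ = 1) {ω : V3} (hcol : ∀ i, R i 0 = ω i) :
    R * P2 e1 * Rᵀ = P2 ω := by
  simp only [P2, Matrix.mul_sub, Matrix.sub_mul, Matrix.mul_one]
  rw [hRR, P1_conj hRR hcol]

lemma det_Fmat_e1 (l1 l2 : ℝ) : (Fmat l1 l2 e1).det = l1 * l2 ^ 2 := by
  rw [Fmat_e1, Matrix.det_fin_three]
  norm_num
  simp [Matrix.cons_val_two, Matrix.vecHead, Matrix.vecTail]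
  ring

lemma P1_mul_P1 {ω : V3} (hω : ‖ω‖ = 1) : P1 ω * P1 ω = P1 ω := by
  have hsq : ∑ k : Fin 3, ω k * ω k = 1 := by
    have h := hω
    rw [EuclideanSpace.norm_eq] at h
    have h2 : (∑ i : Fin 3, ‖ω i‖ ^ 2) = 1 := Real.sqrt_eq_one.mp h
    calc ∑ k : Fin 3, ω k * ω k = ∑ i : Fin 3, ‖ω i‖ ^ 2 := by
          refine Finset.sum_congr rfl fun k _ => ?_
          rw [Real.norm_eq_abs, sq_abs, sq]
      _ = 1 := h2
  ext i j
  rw [Matrix.mul_apply]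
  simp only [P1, Matrix.vecMulVec_apply]
  calc ∑ k : Fin 3, (ω i * ω k) * (ω k * ω j)
      = (ω i * ω j) * ∑ k : Fin 3, ω k * ω k := by
        rw [Finset.mul_sum]; exact Finset.sum_congr rfl fun k _ => by ring
    _ = ω i * ω j := by rw [hsq, mul_one]


/-- Formulas for the Piola–Kirchhoff and Cauchy stresses on spherically
symmetric deformation gradients in terms of the partial derivatives of `L`. -/
theorem stress_on_spherical_gradients
    (W : Mat3 → ℝ)
    (hW0 : ∀ F : Mat3, GLpos F → 0 ≤ W F)
    (hWC1 : ContDiffOn ℝ 1 W {F : Mat3 | GLpos F})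
    (hobj : Objective W) (hiso : Isotropic W) :
    ∀ l1 l2 : ℝ, 0 < l1 → 0 < l2 → ∀ ω : V3, ‖ω‖ = 1 →
      PK W (Fmat l1 l2 ω)
        = (deriv (fun s => Lfun W s l2) l1) • P1 ω
          + ((1/2) * deriv (fun s => Lfun W l1 s) l2) • P2 ω ∧
      ((Fmat l1 l2 ω).det)⁻¹ • (PK W (Fmat l1 l2 ω) * (Fmat l1 l2 ω)ᵀ)
        = (l1 * l2 ^ 2)⁻¹ •
            ((l1 * deriv (fun s => Lfun W s l2) l1) • P1 ω
              + ((1/2) * (l2 * deriv (fun s => Lfun W l1 s) l2)) • P2 ω) := by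
  intro l1 l2 hl1 hl2 ω hω
  obtain ⟨R, hRR, hdR, hcol⟩ := exists_rotation ω hω
  have hD : GLpos (Fmat l1 l2 e1) := GLpos_D hl1 hl2
  have hFc := Fmat_conj hRR hcol l1 l2
  have hPK : PK W (Fmat l1 l2 ω)
      = (deriv (fun s => Lfun W s l2) l1) • P1 ω
        + ((1/2) * deriv (fun s => Lfun W l1 s) l2) • P2 ω := by
    rw [← hFc, PK_conj hWC1 hobj hiso hD hRR hdR, PK_e1 hWC1 hobj hiso hl1 hl2]
    simp only [Matrix.mul_add, Matrix.add_mul, Matrix.mul_smul, Matrix.smul_mul]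
    rw [P1_conj hRR hcol, P2_conj hRR hcol]
  have hdet : (Fmat l1 l2 ω).det = l1 * l2 ^ 2 := by
    rw [← hFc, Matrix.det_mul, Matrix.det_mul, Matrix.det_transpose, hdR, det_Fmat_e1]
    ring
  have hP11 := P1_mul_P1 hω
  have hP12 : P1 ω * P2 ω = 0 := by
    simp [P2, Matrix.mul_sub, hP11]
  have hP21 : P2 ω * P1 ω = 0 := by
    simp [P2, Matrix.sub_mul, hP11]
  have hP22 : P2 ω * P2 ω = P2 ω := by
    have h : (1 - P1 ω) * (1 - P1 ω) = 1 - P1 ω - (P1 ω - P1 ω * P1 ω) := by noncomm_ring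
    rw [P2, h, hP11]
    simp [P2]
  have hFT : (Fmat l1 l2 ω)ᵀ = Fmat l1 l2 ω := by
    have hP1T : (P1 ω)ᵀ = P1 ω := by
      ext i j; simp [P1, Matrix.vecMulVec_apply, Matrix.transpose_apply, mul_comm]
    simp [Fmat, P2, Matrix.transpose_add, Matrix.transpose_smul, Matrix.transpose_sub,
      Matrix.transpose_one, hP1T]
  refine ⟨hPK, ?_⟩
  rw [hPK, hFT, hdet]
  have hprod : ((deriv (fun s => Lfun W s l2) l1) • P1 ω
        + ((1/2) * deriv (fun s => Lfun W l1 s) l2) • P2 ω) * (Fmat l1 l2 ω)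
      = (l1 * deriv (fun s => Lfun W s l2) l1) • P1 ω
        + ((1/2) * (l2 * deriv (fun s => Lfun W l1 s) l2)) • P2 ω := by
    simp only [Fmat, Matrix.add_mul, Matrix.mul_add, Matrix.smul_mul, Matrix.mul_smul,
      hP11, hP12, hP21, hP22, smul_smul, smul_zero, add_zero, zero_add]
    module
  rw [hprod]
end
end

section
/- Let k ≥ 1 and let W : GL⁺(3,ℝ) → [0,∞) be a C^k strain energy function that is objective, isotropic, and homogeneous of degree h. Then there exists a C^k function f : ℝ₊ → [0,∞) with f'(1) = 0 such that W(F(λ,ω)) = (λ₁λ₂²)^{h/3} f(λ₁/λ₂) for all λ = (λ₁,λ₂) ∈ ℝ₊² and all ω ∈ S². -/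
open Matrix Set MeasureTheory

noncomputable section

attribute [local instance] Matrix.normedAddCommGroup Matrix.normedSpace

/-! ### Auxiliary lemmas -/

lemma conj_vecMulVec (R : Mat3) (a : Fin 3 → ℝ) :
    R * Matrix.vecMulVec a a * Rᵀ = Matrix.vecMulVec (R.mulVec a) (R.mulVec a) := by
  ext i j
  simp [Matrix.mul_apply, Matrix.vecMulVec_apply, Matrix.mulVec, dotProduct,
    Fin.sum_univ_three]
  ring

lemma conj_Fmat (R : Mat3) (hR : R * Rᵀ = 1) (l1 l2 : ℝ) (ω ω' : V3)
    (hω' : R.mulVec (fun i => ω i) = fun i => ω' i) :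
    R * Fmat l1 l2 ω * Rᵀ = Fmat l1 l2 ω' := by
  have h1 := conj_vecMulVec R (fun i => ω i)
  rw [hω'] at h1
  simp only [Fmat, P1, P2, Matrix.mul_add, Matrix.add_mul, Matrix.mul_sub, Matrix.sub_mul,
    Matrix.mul_smul, Matrix.smul_mul, Matrix.mul_one, h1, hR]

lemma exists_rot (ω : V3) (hω : ‖ω‖ = 1) :
    ∃ R : Mat3, R * Rᵀ = 1 ∧ R.det = 1 ∧
      R.mulVec (fun i => (EuclideanSpace.single (0 : Fin 3) (1:ℝ)) i) = fun i => ω i := by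
  have hcard : Module.finrank ℝ V3 = Fintype.card (Fin 3) := by simp
  have horth : Orthonormal ℝ (({0} : Set (Fin 3)).restrict (fun _ : Fin 3 => ω)) := by
    constructor
    · intro i; exact hω
    · intro i j hij; exact absurd (Subsingleton.elim i j) hij
  obtain ⟨b, hb⟩ := horth.exists_orthonormalBasis_extension_of_card_eq hcard
  have hb0 : b 0 = ω := hb 0 rfl
  set R0 : Mat3 := Matrix.of (fun i j => b j i) with hR0
  have hR0orth : R0ᵀ * R0 = 1 := by
    ext i j
    have := b.orthonormal
    rw [orthonormal_iff_ite] at this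
    have h2 := this i j
    rw [PiLp.inner_apply] at h2
    simp only [RCLike.inner_apply, starRingEnd_apply, star_trivial] at h2
    simp only [Matrix.mul_apply, Matrix.transpose_apply, hR0, Matrix.of_apply, Matrix.one_apply]
    rw [← h2]
    exact Finset.sum_congr rfl fun x _ => mul_comm _ _
  have hR0orth' : R0 * R0ᵀ = 1 := mul_eq_one_comm.mp hR0orth
  have hd2 : R0.det * R0.det = 1 := by
    have := congrArg Matrix.det hR0orth
    rwa [Matrix.det_mul, Matrix.det_transpose, Matrix.det_one] at this
  set d := R0.det
  refine ⟨R0 * Matrix.diagonal ![1, 1, d], ?_, ?_, ?_⟩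
  · have hDD : Matrix.diagonal ![1,1,d] * (Matrix.diagonal ![1,1,d])ᵀ = 1 := by
      rw [Matrix.diagonal_transpose, Matrix.diagonal_mul_diagonal]
      ext i j
      fin_cases i <;> fin_cases j <;> simp [Matrix.diagonal, hd2]
    rw [Matrix.transpose_mul, ← Matrix.mul_assoc, Matrix.mul_assoc R0]
    rw [hDD, Matrix.mul_one, hR0orth']
  · rw [Matrix.det_mul, Matrix.det_diagonal]
    simp [Fin.prod_univ_three, hd2]
    exact hd2
  · rw [← Matrix.mulVec_mulVec]
    have he : (fun i => (EuclideanSpace.single (0 : Fin 3) (1:ℝ)) i) = Pi.single 0 1 := by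
      funext i; simp [EuclideanSpace.single_apply, Pi.single_apply]
    rw [he]
    have hD : (Matrix.diagonal ![1,1,d]).mulVec (Pi.single 0 1) = Pi.single 0 1 := by
      funext i; rw [Matrix.mulVec_diagonal]; fin_cases i <;> simp
    rw [hD]
    funext i
    simp [Matrix.mulVec_single, hR0, ← hb0]

lemma P1_single (i : Fin 3) :
    P1 (EuclideanSpace.single i 1) = Matrix.single i i 1 := by
  ext a b
  simp [P1, Matrix.vecMulVec_apply, EuclideanSpace.single_apply, Matrix.single]
  aesop

lemma Fmat_diag (l1 l2 : ℝ) :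
    Fmat l1 l2 (EuclideanSpace.single 0 1) = Matrix.diagonal ![l1, l2, l2] := by
  rw [Fmat, P2, P1_single]
  ext a b
  fin_cases a <;> fin_cases b <;>
    simp [Matrix.single, Matrix.diagonal, Matrix.one_apply]

lemma Fmat_scale (l1 l2 : ℝ) (hl2 : l2 ≠ 0) (ω : V3) :
    Fmat l1 l2 ω = l2 • Fmat (l1 / l2) 1 ω := by
  rw [Fmat, Fmat, smul_add, smul_smul, smul_smul, mul_div_cancel₀ _ hl2, mul_one]

lemma Fmat_one (ω : V3) : Fmat 1 1 ω = 1 := by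
  simp [Fmat, P2]

lemma Fmat_u (u : ℝ) (i : Fin 3) :
    Fmat u 1 (EuclideanSpace.single i 1) = 1 + (u - 1) • Matrix.single i i 1 := by
  rw [Fmat, P2, P1_single]
  module

lemma sum_std : (Matrix.single (0:Fin 3) (0:Fin 3) (1:ℝ))
    + Matrix.single (1:Fin 3) (1:Fin 3) (1:ℝ)
    + Matrix.single (2:Fin 3) (2:Fin 3) (1:ℝ) = 1 := by
  ext a b
  fin_cases a <;> fin_cases b <;> simp [Matrix.single, Matrix.one_apply]

lemma det_Fmat_diag (l1 l2 : ℝ) :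
    (Fmat l1 l2 (EuclideanSpace.single 0 1)).det = l1 * (l2 * l2) := by
  rw [Fmat_diag, Matrix.det_diagonal]
  simp [Fin.prod_univ_three]
  ring

/-- For a `C^k` objective, isotropic, degree-`h` homogeneous strain energy,
there is a `C^k` function `f` on `ℝ₊` with `f'(1) = 0` such that
`W(F(λ,ω)) = (λ₁λ₂²)^{h/3} f(λ₁/λ₂)`. -/
theorem scale_invariant_strain_energy_representation
    (k : ℕ) (hk : 1 ≤ k) (W : Mat3 → ℝ) (h : ℝ)
    (hW0 : ∀ F : Mat3, GLpos F → 0 ≤ W F)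
    (hWCk : ContDiffOn ℝ (k : ℕ∞) W {F : Mat3 | GLpos F})
    (hobj : Objective W) (hiso : Isotropic W) (hhom : HomDeg W h) :
    ∃ f : ℝ → ℝ,
      ContDiffOn ℝ (k : ℕ∞) f (Set.Ioi 0) ∧
      (∀ u : ℝ, 0 < u → 0 ≤ f u) ∧
      deriv f 1 = 0 ∧
      ∀ l1 l2 : ℝ, 0 < l1 → 0 < l2 → ∀ ω : V3, ‖ω‖ = 1 →
        W (Fmat l1 l2 ω) = (l1 * l2 ^ 2) ^ (h / 3) * f (l1 / l2) := by
  have hSopen : IsOpen {F : Mat3 | GLpos F} := by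
    have : Continuous fun F : Mat3 => F.det := Continuous.matrix_det continuous_id
    exact isOpen_Ioi.preimage this
  have hk1 : (1 : WithTop ℕ∞) ≤ ((k : ℕ∞) : WithTop ℕ∞) := by exact_mod_cast hk
  have hdiff : ∀ F : Mat3, GLpos F → DifferentiableAt ℝ W F := fun F hF =>
    ((hWCk.contDiffAt (hSopen.mem_nhds hF)).differentiableAt (by exact_mod_cast (by omega : k ≠ 0)))
  set e : Fin 3 → V3 := fun i => EuclideanSpace.single i 1 with he
  have hnorme : ∀ i, ‖e i‖ = 1 := fun i => by simp [he, EuclideanSpace.norm_single]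
  -- GLpos facts
  have hGL : ∀ l1 l2 : ℝ, 0 < l1 → 0 < l2 → GLpos (Fmat l1 l2 (e 0)) := by
    intro l1 l2 h1 h2
    show 0 < _
    rw [he, det_Fmat_diag]
    positivity
  have hGL1 : GLpos (1 : Mat3) := by simp [GLpos]
  -- independence of ω
  have hind : ∀ l1 l2 : ℝ, 0 < l1 → 0 < l2 → ∀ ω : V3, ‖ω‖ = 1 →
      W (Fmat l1 l2 ω) = W (Fmat l1 l2 (e 0)) := by
    intro l1 l2 h1 h2 ω hω
    obtain ⟨R, hRR, hRdet, hRe⟩ := exists_rot ω hω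
    have hRtR : Rᵀ * Rᵀᵀ = 1 := by rw [Matrix.transpose_transpose]; exact mul_eq_one_comm.mp hRR
    have hRtdet : Rᵀ.det = 1 := by rw [Matrix.det_transpose]; exact hRdet
    have hconj : R * Fmat l1 l2 (e 0) * Rᵀ = Fmat l1 l2 ω := conj_Fmat R hRR l1 l2 (e 0) ω hRe
    have hGL0 : GLpos (Fmat l1 l2 (e 0)) := hGL l1 l2 h1 h2
    have hGLRt : GLpos (Fmat l1 l2 (e 0) * Rᵀ) := by
      show 0 < _
      rw [Matrix.det_mul, hRtdet, mul_one]
      exact hGL0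
    calc W (Fmat l1 l2 ω) = W (R * (Fmat l1 l2 (e 0) * Rᵀ)) := by rw [← Matrix.mul_assoc, hconj]
      _ = W (Fmat l1 l2 (e 0) * Rᵀ) := hobj _ hGLRt R hRR hRdet
      _ = W (Fmat l1 l2 (e 0)) := hiso _ hGL0 Rᵀ hRtR hRtdet
  set g : ℝ → ℝ := fun u => W (Fmat u 1 (e 0)) with hgdef
  refine ⟨fun u => u ^ (-(h/3)) * g u, ?_, ?_, ?_, ?_⟩
  · -- smoothness
    have hinner : ContDiff ℝ (k : ℕ∞) (fun u : ℝ => Fmat u 1 (e 0)) := by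
      simp only [Fmat]
      exact (contDiff_id.smul contDiff_const).add contDiff_const
    have hmaps : MapsTo (fun u : ℝ => Fmat u 1 (e 0)) (Ioi 0) {F : Mat3 | GLpos F} :=
      fun u hu => hGL u 1 hu one_pos
    have hg : ContDiffOn ℝ (k : ℕ∞) g (Ioi 0) := hWCk.comp hinner.contDiffOn hmaps
    have hφ : ContDiffOn ℝ (k : ℕ∞) (fun u : ℝ => u ^ (-(h/3))) (Ioi 0) :=
      fun x hx => (Real.contDiffAt_rpow_const_of_ne (ne_of_gt hx)).contDiffWithinAt
    exact hφ.mul hg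
  · -- nonnegativity
    intro u hu
    exact mul_nonneg (Real.rpow_nonneg hu.le _) (hW0 _ (hGL u 1 hu one_pos))
  · -- derivative at 1 vanishes
    have hW1 : HasFDerivAt W (fderiv ℝ W 1) 1 := (hdiff 1 hGL1).hasFDerivAt
    set L := fderiv ℝ W (1 : Mat3) with hL
    -- derivative of u ↦ W (Fmat u 1 (e i))
    have hgi : ∀ i : Fin 3, HasDerivAt (fun u => W (Fmat u 1 (e i)))
        (L (Matrix.single i i 1)) 1 := by
      intro i
      have hc : HasDerivAt (fun u : ℝ => Fmat u 1 (e i)) (Matrix.single i i 1) 1 := by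
        have heq : (fun u : ℝ => Fmat u 1 (e i))
            = fun u => 1 + (u - 1) • Matrix.single i i 1 := funext fun u => Fmat_u u i
        rw [heq]
        have h1 : HasDerivAt (fun u : ℝ => (u - 1) • Matrix.single i i (1:ℝ))
            ((1:ℝ) • Matrix.single i i (1:ℝ)) 1 :=
          ((hasDerivAt_id 1).sub_const 1).smul_const _
        rw [one_smul] at h1
        exact h1.const_add 1
      have hW1' : HasFDerivAt W L (Fmat 1 1 (e i)) := by rw [Fmat_one]; exact hW1
      exact hW1'.comp_hasDerivAt 1 hc
    -- equality of directional derivatives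
    have hLeq : ∀ i : Fin 3, L (Matrix.single i i 1) = L (Matrix.single (0:Fin 3) (0:Fin 3) 1) := by
      intro i
      have hev : (fun u => W (Fmat u 1 (e 0))) =ᶠ[nhds 1] (fun u => W (Fmat u 1 (e i))) := by
        filter_upwards [isOpen_Ioi.mem_nhds (show (0:ℝ) < 1 by norm_num)] with u hu
        rw [hind u 1 hu one_pos (e i) (hnorme i)]
      exact ((hgi i).congr_of_eventuallyEq hev).unique (hgi 0)
    -- Euler relation
    have hEuler : L (1 : Mat3) = h * W 1 := by
      have hc : HasDerivAt (fun σ : ℝ => σ • (1 : Mat3)) (1 : Mat3) 1 := by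
        have := (hasDerivAt_id (1:ℝ)).smul_const (1 : Mat3)
        rwa [one_smul] at this
      have hW1' : HasFDerivAt W L ((1:ℝ) • (1 : Mat3)) := by rw [one_smul]; exact hW1
      have hψ : HasDerivAt (fun σ : ℝ => W (σ • (1 : Mat3))) (L (1 : Mat3)) 1 :=
        hW1'.comp_hasDerivAt 1 hc
      have hψ2 : HasDerivAt (fun σ : ℝ => σ ^ h * W 1) (h * W 1) 1 := by
        have := (Real.hasDerivAt_rpow_const (p := h) (x := 1) (Or.inl one_ne_zero)).mul_const (W 1)
        rwa [Real.one_rpow, mul_one] at this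
      have hev : (fun σ : ℝ => W (σ • (1 : Mat3))) =ᶠ[nhds 1] (fun σ : ℝ => σ ^ h * W 1) := by
        filter_upwards [isOpen_Ioi.mem_nhds (show (0:ℝ) < 1 by norm_num)] with σ hσ
        exact hhom 1 hGL1 σ hσ
      exact ((hψ2.congr_of_eventuallyEq hev).unique hψ).symm
    have hsum : L (1 : Mat3) = L (Matrix.single (0:Fin 3) (0:Fin 3) 1)
        + L (Matrix.single (1:Fin 3) (1:Fin 3) 1)
        + L (Matrix.single (2:Fin 3) (2:Fin 3) 1) := by
      rw [← sum_std, map_add, map_add]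
    have hE0 : L (Matrix.single (0:Fin 3) (0:Fin 3) 1) = h / 3 * W 1 := by
      rw [hLeq 1, hLeq 2] at hsum
      rw [hEuler] at hsum
      linarith
    -- derivative of f at 1
    have hφ1 : HasDerivAt (fun u : ℝ => u ^ (-(h/3))) (-(h/3)) 1 := by
      have := Real.hasDerivAt_rpow_const (p := -(h/3)) (x := 1) (Or.inl one_ne_zero)
      rwa [Real.one_rpow, mul_one] at this
    have hg1 : HasDerivAt g (h / 3 * W 1) 1 := by
      have := hgi 0
      rwa [hE0] at this
    have hf1 : HasDerivAt (fun u : ℝ => u ^ (-(h/3)) * g u)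
        (-(h/3) * g 1 + (1:ℝ) ^ (-(h/3)) * (h / 3 * W 1)) 1 := hφ1.mul hg1
    rw [hf1.deriv]
    have hg1v : g 1 = W 1 := by rw [hgdef]; simp only [Fmat_one]
    rw [hg1v, Real.one_rpow]
    ring
  · -- the representation formula
    intro l1 l2 h1 h2 ω hω
    have hu : 0 < l1 / l2 := div_pos h1 h2
    have step1 : W (Fmat l1 l2 ω) = W (Fmat l1 l2 (e 0)) := hind l1 l2 h1 h2 ω hω
    have step2 : W (Fmat l1 l2 (e 0)) = l2 ^ h * g (l1 / l2) := by
      rw [Fmat_scale l1 l2 (ne_of_gt h2) (e 0)]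
      exact hhom _ (hGL _ 1 hu one_pos) l2 h2
    have key : (l1 * l2 ^ 2) ^ (h/3) * (l1 / l2) ^ (-(h/3)) = l2 ^ h := by
      rw [Real.rpow_neg hu.le, ← div_eq_mul_inv,
        ← Real.div_rpow (by positivity) hu.le]
      have hq : (l1 * l2 ^ 2) / (l1 / l2) = l2 ^ (3:ℕ) := by
        field_simp
      rw [hq, ← Real.rpow_natCast l2 3, ← Real.rpow_mul h2.le]
      congr 1
      ring
    rw [step1, step2, ← key]
    ring
end
end
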